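/- arXiv:2312.09845 — 7 statements merged into one kernel-verified Lean document; each statement's English description precedes it below -/
import Mathlib

section
/- Let σ: ℕ → ℝ be a positive sequence converging to 0, and let Π, Δ: ℕ → ℝ be positive sequences. Then the sequence g_n = σ_n / (σ_n² + Δ_n/Π_n) is bounded if and only if there exist c > 0 and N such that for all n ≥ N, Δ_n ≥ c · σ_n · Π_n. -/
/-- Continuity criterion for the MSE-optimal spectral reconstruction operator:
the filter coefficients `g n = σ n / (σ n ^ 2 + Δ n / P n)` are bounded iff
`Δ n ≥ c * σ n * P n` for some `c > 0` and all sufficiently large `n`. -/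
theorem stmt0 (σ P Δ : ℕ → ℝ)
    (hσ : ∀ n, 0 < σ n) (hσ0 : Filter.Tendsto σ Filter.atTop (nhds 0))
    (hP : ∀ n, 0 < P n) (hΔ : ∀ n, 0 < Δ n) :
    (∃ C : ℝ, ∀ n, σ n / (σ n ^ 2 + Δ n / P n) ≤ C) ↔
      (∃ c : ℝ, 0 < c ∧ ∃ N : ℕ, ∀ n ≥ N, Δ n ≥ c * σ n * P n) := by
  have hden : ∀ n, 0 < σ n ^ 2 + Δ n / P n := fun n =>
    add_pos (pow_pos (hσ n) 2) (div_pos (hΔ n) (hP n))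
  constructor
  · rintro ⟨C, hC⟩
    have hCpos : 0 < C := lt_of_lt_of_le (div_pos (hσ 0) (hden 0)) (hC 0)
    have hev : ∀ᶠ n in Filter.atTop, σ n < 1 / (2 * C) :=
      hσ0.eventually (gt_mem_nhds (by positivity))
    obtain ⟨N, hN⟩ := Filter.eventually_atTop.mp hev
    refine ⟨1 / (2 * C), by positivity, N, fun n hn => ?_⟩
    have h1 : σ n ≤ C * (σ n ^ 2 + Δ n / P n) := (div_le_iff₀ (hden n)).mp (hC n)
    have h2 : σ n < 1 / (2 * C) := hN n hn
    have hq : σ n / (2 * C) ≤ Δ n / P n := by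
      rw [div_le_iff₀ (by positivity)]
      have h2' : σ n * (2 * C) < 1 := (lt_div_iff₀ (by positivity)).mp h2
      nlinarith [mul_lt_mul_of_pos_left h2' (hσ n), mul_pos hCpos (hσ n)]
    have hmul := mul_le_mul_of_nonneg_right hq (le_of_lt (hP n))
    rw [div_mul_cancel₀ (Δ n) (ne_of_gt (hP n))] at hmul
    calc 1 / (2 * C) * σ n * P n = σ n / (2 * C) * P n := by ring
      _ ≤ Δ n := hmul
  · rintro ⟨c, hc, N, hN⟩
    refine ⟨max (1 / c) (∑ n ∈ Finset.range N, σ n / (σ n ^ 2 + Δ n / P n)), fun n => ?_⟩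
    by_cases h : n < N
    · refine le_trans ?_ (le_max_right _ _)
      exact Finset.single_le_sum (fun i _ => le_of_lt (div_pos (hσ i) (hden i)))
        (Finset.mem_range.mpr h)
    · push_neg at h
      refine le_trans ?_ (le_max_left _ _)
      have hq : c * σ n ≤ Δ n / P n := (le_div_iff₀ (hP n)).mpr (by linarith [hN n h])
      rw [div_le_div_iff₀ (hden n) hc]
      nlinarith [sq_nonneg (σ n), hσ n]
end

section
/- Let σ, Π: ℕ → ℝ be positive sequences with σ_n → 0 and ∑ Π_n < ∞, let x: ℕ → ℝ satisfy ∑ x_n² < ∞. For δ > 0 and a noise sequence Δ: ℕ → ℝ with 0 ≤ Δ_n ≤ δ² for all n, define E(Δ, δ) = ∑_n [ δ⁴/(Π_n σ_n² + δ²)² · x_n² + Π_n σ_n² Δ_n/(Π_n σ_n² + δ²)² · Π_n ]. Then sup over all such Δ of E(Δ, δ) tends to 0 as δ → 0. -/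
set_option maxHeartbeats 1000000 in
/-- Convergence of the MSE-optimal spectral regularizer trained with white noise of
level `δ`, uniformly over all test noise with coefficients bounded by `δ ^ 2`. -/
theorem stmt3 (σ P x : ℕ → ℝ)
    (hσ : ∀ n, 0 < σ n) (hσ0 : Filter.Tendsto σ Filter.atTop (nhds 0))
    (hP : ∀ n, 0 < P n) (hPsum : Summable P)
    (hx : Summable fun n => x n ^ 2) :
    ∀ ε > (0 : ℝ), ∃ δ₀ > (0 : ℝ), ∀ δ : ℝ, 0 < δ → δ ≤ δ₀ →
      ∀ Δ : ℕ → ℝ, (∀ n, 0 ≤ Δ n ∧ Δ n ≤ δ ^ 2) →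
        (∑' n, (δ ^ 4 / (P n * σ n ^ 2 + δ ^ 2) ^ 2 * x n ^ 2 +
            P n * σ n ^ 2 * Δ n / (P n * σ n ^ 2 + δ ^ 2) ^ 2 * P n)) ≤ ε := by
  intro ε hε
  set g : ℕ → ℝ := fun n => x n ^ 2 + P n with hg
  have hgsum : Summable g := hx.add hPsum
  have htail : Filter.Tendsto (fun N => ∑' k, g (k + N)) Filter.atTop (nhds 0) :=
    tendsto_sum_nat_add g
  obtain ⟨N, hN⟩ := Metric.tendsto_atTop.mp htail (ε / 2) (by linarith)
  have hNtail : ∑' k, g (k + N) < ε / 2 := by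
    have := hN N le_rfl
    rw [Real.dist_eq, sub_zero] at this
    exact lt_of_le_of_lt (le_abs_self _) this
  set C : ℝ := ∑ n ∈ Finset.range N, (x n ^ 2 / (P n * σ n ^ 2) ^ 2 + 1 / σ n ^ 2) with hC
  have hC0 : 0 ≤ C := Finset.sum_nonneg fun n _ => by positivity
  have hC1 : (0 : ℝ) < C + 1 := by linarith
  refine ⟨min 1 (Real.sqrt (ε / (2 * (C + 1)))), ?_, ?_⟩
  · exact lt_min one_pos (Real.sqrt_pos.mpr (div_pos hε (by linarith)))
  intro δ hδ hδle Δ hΔ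
  set f : ℕ → ℝ := fun n => δ ^ 4 / (P n * σ n ^ 2 + δ ^ 2) ^ 2 * x n ^ 2 +
      P n * σ n ^ 2 * Δ n / (P n * σ n ^ 2 + δ ^ 2) ^ 2 * P n with hf
  have hf0 : ∀ n, 0 ≤ f n := by
    intro n
    refine add_nonneg (mul_nonneg (div_nonneg (by positivity) (sq_nonneg _)) (sq_nonneg _)) ?_
    exact mul_nonneg (div_nonneg (mul_nonneg (mul_nonneg (hP n).le (sq_nonneg _)) (hΔ n).1)
      (sq_nonneg _)) (hP n).le
  have hfle : ∀ n, f n ≤ g n := by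
    intro n
    have hσ2 : 0 < σ n ^ 2 := pow_pos (hσ n) 2
    have ha : 0 < P n * σ n ^ 2 := mul_pos (hP n) hσ2
    have hd : 0 < (P n * σ n ^ 2 + δ ^ 2) ^ 2 := pow_pos (add_pos ha (pow_pos hδ 2)) 2
    obtain ⟨hΔ0, hΔle⟩ := hΔ n
    have h1 : δ ^ 4 / (P n * σ n ^ 2 + δ ^ 2) ^ 2 * x n ^ 2 ≤ x n ^ 2 := by
      refine mul_le_of_le_one_left (sq_nonneg _) ?_
      rw [div_le_one hd]; nlinarith [mul_nonneg ha.le (sq_nonneg δ)]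
    have h2 : P n * σ n ^ 2 * Δ n / (P n * σ n ^ 2 + δ ^ 2) ^ 2 * P n ≤ P n := by
      refine mul_le_of_le_one_left (hP n).le ?_
      rw [div_le_one hd]
      nlinarith [mul_nonneg ha.le (sub_nonneg.2 hΔle), mul_nonneg ha.le (sq_nonneg δ),
        sq_nonneg (δ ^ 2), sq_nonneg (P n * σ n ^ 2)]
    simpa [hf, hg] using add_le_add h1 h2
  have hfsum : Summable f := Summable.of_nonneg_of_le hf0 hfle hgsum
  have hsplit : ∑' n, f n = ∑ n ∈ Finset.range N, f n + ∑' k, f (k + N) :=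
    (Summable.sum_add_tsum_nat_add N hfsum).symm
  have htail_le : ∑' k, f (k + N) ≤ ∑' k, g (k + N) :=
    Summable.tsum_le_tsum (fun k => hfle _) ((summable_nat_add_iff N).mpr hfsum)
      ((summable_nat_add_iff N).mpr hgsum)
  have hδ1 : δ ≤ 1 := le_trans hδle (min_le_left _ _)
  have hδ2 : δ ^ 2 ≤ ε / (2 * (C + 1)) := by
    have h := le_trans hδle (min_le_right _ _)
    have h2 := Real.sq_sqrt (show (0:ℝ) ≤ ε / (2 * (C + 1)) by positivity)
    nlinarith [Real.sqrt_nonneg (ε / (2 * (C + 1)))]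
  have hhead : ∑ n ∈ Finset.range N, f n ≤ δ ^ 2 * C := by
    rw [hC, Finset.mul_sum]
    apply Finset.sum_le_sum
    intro n _
    have hσ2 : 0 < σ n ^ 2 := pow_pos (hσ n) 2
    have ha : 0 < P n * σ n ^ 2 := mul_pos (hP n) hσ2
    have hd : 0 < (P n * σ n ^ 2 + δ ^ 2) ^ 2 := pow_pos (add_pos ha (pow_pos hδ 2)) 2
    obtain ⟨hΔ0, hΔle⟩ := hΔ n
    have h1 : δ ^ 4 / (P n * σ n ^ 2 + δ ^ 2) ^ 2 * x n ^ 2 ≤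
        δ ^ 2 * (x n ^ 2 / (P n * σ n ^ 2) ^ 2) := by
      have hdiv : δ ^ 4 / (P n * σ n ^ 2 + δ ^ 2) ^ 2 ≤ δ ^ 2 / (P n * σ n ^ 2) ^ 2 := by
        apply div_le_div₀ (sq_nonneg δ) ?_ (pow_pos ha 2) ?_
        · nlinarith [mul_nonneg (mul_nonneg (sub_nonneg.2 hδ1) (add_pos hδ one_pos).le)
              (sq_nonneg δ)]
        · nlinarith [mul_nonneg ha.le (sq_nonneg δ), sq_nonneg (δ ^ 2)]
      calc δ ^ 4 / (P n * σ n ^ 2 + δ ^ 2) ^ 2 * x n ^ 2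
          ≤ δ ^ 2 / (P n * σ n ^ 2) ^ 2 * x n ^ 2 :=
            mul_le_mul_of_nonneg_right hdiv (sq_nonneg _)
        _ = δ ^ 2 * (x n ^ 2 / (P n * σ n ^ 2) ^ 2) := by ring
    have h2 : P n * σ n ^ 2 * Δ n / (P n * σ n ^ 2 + δ ^ 2) ^ 2 * P n ≤
        δ ^ 2 * (1 / σ n ^ 2) := by
      rw [mul_one_div, div_mul_eq_mul_div, div_le_div_iff₀ hd hσ2]
      nlinarith [mul_nonneg (mul_nonneg (mul_nonneg ha.le (sub_nonneg.2 hΔle)) (hP n).le)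
          hσ2.le, mul_nonneg ha.le (sq_nonneg (δ ^ 2)), sq_nonneg (δ ^ 3)]
    calc f n ≤ δ ^ 2 * (x n ^ 2 / (P n * σ n ^ 2) ^ 2) + δ ^ 2 * (1 / σ n ^ 2) :=
          add_le_add h1 h2
      _ = δ ^ 2 * (x n ^ 2 / (P n * σ n ^ 2) ^ 2 + 1 / σ n ^ 2) := by ring
  have hδ2C : δ ^ 2 * C ≤ ε / 2 := by
    have h := mul_le_mul_of_nonneg_right hδ2 hC1.le
    have heq : ε / (2 * (C + 1)) * (C + 1) = ε / 2 := by
      field_simp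
    nlinarith [sq_nonneg δ]
  calc ∑' n, f n = ∑ n ∈ Finset.range N, f n + ∑' k, f (k + N) := hsplit
    _ ≤ δ ^ 2 * C + ε / 2 := add_le_add hhead (le_trans htail_le hNtail.le)
    _ ≤ ε := by linarith
end

section
/- Let σ, Π: ℕ → ℝ be positive sequences with σ_n → 0 and ∑ Π_n < ∞, let x: ℕ → ℝ with ∑ x_n² < ∞. For noise sequences Δ: ℕ → ℝ≥0 with sup_n Δ_n ≤ δ², define E(Δ) = ∑_n [ Δ_n²/(Π_n σ_n² + Δ_n)² · x_n² + Π_n σ_n² Δ_n/(Π_n σ_n² + Δ_n)² · Π_n ]. Then sup over all such Δ of E(Δ) tends to 0 as δ → 0. -/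
lemma aux_term_le (c d p y : ℝ) (hc : 0 < c) (hd : 0 ≤ d) (hp : 0 < p) :
    d ^ 2 / (c + d) ^ 2 * y ^ 2 + c * d / (c + d) ^ 2 * p ≤ y ^ 2 + p / 2 := by
  have hcd : 0 < (c + d) ^ 2 := by positivity
  have h1 : d ^ 2 / (c + d) ^ 2 ≤ 1 := by
    rw [div_le_one hcd]; nlinarith
  have h2 : c * d / (c + d) ^ 2 ≤ 1 / 2 := by
    rw [div_le_iff₀ hcd]; nlinarith
  have := mul_le_of_le_one_left (sq_nonneg y) h1
  nlinarith [mul_le_mul_of_nonneg_right h2 hp.le, sq_nonneg y,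
    mul_le_mul_of_nonneg_right h1 (sq_nonneg y)]

lemma aux_term_nonneg (c d p y : ℝ) (hc : 0 < c) (hd : 0 ≤ d) (hp : 0 < p) :
    0 ≤ d ^ 2 / (c + d) ^ 2 * y ^ 2 + c * d / (c + d) ^ 2 * p := by positivity

lemma aux_term_small (c d p y δ : ℝ) (hc : 0 < c) (hd : 0 ≤ d) (hp : 0 < p)
    (hδ : 0 < δ) (hδ1 : δ ≤ 1) (hdδ : d ≤ δ ^ 2) :
    d ^ 2 / (c + d) ^ 2 * y ^ 2 + c * d / (c + d) ^ 2 * p ≤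
      δ ^ 2 * (y ^ 2 / c ^ 2 + p / c) := by
  have hc2 : 0 < c ^ 2 := by positivity
  have hcd : 0 < (c + d) ^ 2 := by positivity
  have hδsq : δ ^ 2 ≤ 1 := by nlinarith
  have hdd : d ^ 2 ≤ δ ^ 2 := by
    nlinarith [mul_le_mul hdδ hdδ hd (by positivity : (0:ℝ) ≤ δ ^ 2)]
  have hcc : c ^ 2 ≤ (c + d) ^ 2 := by nlinarith
  have h1 : d ^ 2 / (c + d) ^ 2 ≤ δ ^ 2 / c ^ 2 := by
    rw [div_le_div_iff₀ hcd hc2]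
    exact mul_le_mul hdd hcc (sq_nonneg c) (by positivity)
  have h2 : c * d / (c + d) ^ 2 ≤ δ ^ 2 / c := by
    rw [div_le_div_iff₀ hcd hc]
    nlinarith [sq_nonneg d, mul_le_mul_of_nonneg_left hdδ (sq_nonneg c)]
  have := mul_le_mul_of_nonneg_right h1 (sq_nonneg y)
  have := mul_le_mul_of_nonneg_right h2 hp.le
  have e1 : δ ^ 2 / c ^ 2 * y ^ 2 = δ ^ 2 * (y ^ 2 / c ^ 2) := by ring
  have e2 : δ ^ 2 / c * p = δ ^ 2 * (p / c) := by ring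
  nlinarith

/-- Main convergence theorem for learned spectral regularization with matched training
noise: the expected squared error tends to zero uniformly over all noise sequences
with level at most `δ`, as `δ → 0`. -/
theorem stmt4 (σ P x : ℕ → ℝ)
    (hσ : ∀ n, 0 < σ n) (hσ0 : Filter.Tendsto σ Filter.atTop (nhds 0))
    (hP : ∀ n, 0 < P n) (hPsum : Summable P)
    (hx : Summable fun n => x n ^ 2) :
    ∀ ε > (0 : ℝ), ∃ δ₀ > (0 : ℝ), ∀ δ : ℝ, 0 < δ → δ ≤ δ₀ →
      ∀ Δ : ℕ → ℝ, (∀ n, 0 ≤ Δ n) → (∀ n, Δ n ≤ δ ^ 2) →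
        (∑' n, (Δ n ^ 2 / (P n * σ n ^ 2 + Δ n) ^ 2 * x n ^ 2 +
            P n * σ n ^ 2 * Δ n / (P n * σ n ^ 2 + Δ n) ^ 2 * P n)) ≤ ε := by
  intro ε hε
  set c : ℕ → ℝ := fun n => P n * σ n ^ 2 with hcdef
  have hcpos : ∀ n, 0 < c n := fun n => mul_pos (hP n) (pow_pos (hσ n) 2)
  set g : ℕ → ℝ := fun n => x n ^ 2 + P n / 2 with hgdef
  have hgsum : Summable g := hx.add (hPsum.div_const 2)
  have hgnn : ∀ n, 0 ≤ g n := fun n => by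
    have := (hP n).le; have := sq_nonneg (x n); simp only [hgdef]; nlinarith
  -- choose N so the tail of g is small
  have htail : Filter.Tendsto (fun i => ∑' k, g (k + i)) Filter.atTop (nhds 0) :=
    tendsto_sum_nat_add g
  obtain ⟨N, hN⟩ := (Metric.tendsto_atTop.mp htail (ε / 2) (by linarith))
  have hNtail : ∑' k, g (k + N) < ε / 2 := by
    have := hN N le_rfl
    rw [Real.dist_eq, sub_zero] at this
    calc ∑' k, g (k + N) ≤ |∑' k, g (k + N)| := le_abs_self _
    _ < ε / 2 := this
  -- choose δ₀
  set M : ℝ := ∑ n ∈ Finset.range N, (x n ^ 2 / c n ^ 2 + P n / c n) with hMdef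
  have hM : 0 ≤ M := Finset.sum_nonneg fun n _ =>
    add_nonneg (div_nonneg (sq_nonneg _) (sq_nonneg _)) (div_nonneg (hP n).le (hcpos n).le)
  refine ⟨min 1 (Real.sqrt (ε / (2 * (M + 1)))), lt_min one_pos (Real.sqrt_pos.mpr (div_pos hε (by linarith))), ?_⟩
  intro δ hδ hδ0 Δ hΔnn hΔle
  have hδ1 : δ ≤ 1 := le_trans hδ0 (min_le_left _ _)
  have hδ2 : δ ^ 2 ≤ ε / (2 * (M + 1)) := by
    have h := le_trans hδ0 (min_le_right _ _)
    have hsq : Real.sqrt (ε / (2 * (M + 1))) ^ 2 = ε / (2 * (M + 1)) :=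
      Real.sq_sqrt (le_of_lt (div_pos hε (by linarith)))
    calc δ ^ 2 ≤ Real.sqrt (ε / (2 * (M + 1))) ^ 2 := by
          exact pow_le_pow_left₀ hδ.le h 2
      _ = ε / (2 * (M + 1)) := hsq
  set f : ℕ → ℝ := fun n => Δ n ^ 2 / (c n + Δ n) ^ 2 * x n ^ 2 +
      c n * Δ n / (c n + Δ n) ^ 2 * P n with hfdef
  have hfnn : ∀ n, 0 ≤ f n := fun n => aux_term_nonneg _ _ _ _ (hcpos n) (hΔnn n) (hP n)
  have hfg : ∀ n, f n ≤ g n := fun n => aux_term_le _ _ _ _ (hcpos n) (hΔnn n) (hP n)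
  have hfsum : Summable f := Summable.of_nonneg_of_le hfnn hfg hgsum
  have hsplit : ∑' n, f n = (∑ n ∈ Finset.range N, f n) + ∑' k, f (k + N) :=
    (Summable.sum_add_tsum_nat_add N hfsum).symm
  have hfin : ∑ n ∈ Finset.range N, f n ≤ ε / 2 := by
    calc ∑ n ∈ Finset.range N, f n
        ≤ ∑ n ∈ Finset.range N, δ ^ 2 * (x n ^ 2 / c n ^ 2 + P n / c n) :=
          Finset.sum_le_sum fun n _ =>
            aux_term_small _ _ _ _ _ (hcpos n) (hΔnn n) (hP n) hδ hδ1 (hΔle n)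
      _ = δ ^ 2 * M := by rw [← Finset.mul_sum]
      _ ≤ (ε / (2 * (M + 1))) * M := mul_le_mul_of_nonneg_right hδ2 hM
      _ ≤ ε / 2 := by
          rw [div_mul_eq_mul_div, div_le_div_iff₀ (by positivity) (by norm_num)]
          nlinarith
  have htl : ∑' k, f (k + N) ≤ ∑' k, g (k + N) :=
    Summable.tsum_le_tsum (fun k => hfg (k + N)) ((summable_nat_add_iff N).mpr hfsum)
      ((summable_nat_add_iff N).mpr hgsum)
  show ∑' n, f n ≤ ε
  rw [hsplit]
  linarith
end

section
/- Let σ, Π, ΔTilde: ℕ → ℝ be positive sequences with σ_n → 0 and σ_n bounded. Then the sequence g_n = σ_n/(σ_n² + σ_n²·ΔTilde_n/Π_n) is bounded if and only if there exist c > 0 and N such that σ_n · ΔTilde_n ≥ c · Π_n for all n ≥ N. -/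
/-- Continuity criterion for the post-processing reconstruction operator:
the filter coefficients `σ n / (σ n ^ 2 + σ n ^ 2 * ΔT n / P n)` are bounded iff
`σ n * ΔT n ≥ c * P n` eventually. -/
theorem stmt6 (σ P ΔT : ℕ → ℝ)
    (hσ : ∀ n, 0 < σ n) (hσ0 : Filter.Tendsto σ Filter.atTop (nhds 0))
    (hσb : ∃ M : ℝ, ∀ n, σ n ≤ M)
    (hP : ∀ n, 0 < P n) (hΔ : ∀ n, 0 < ΔT n) :
    (∃ C : ℝ, ∀ n, σ n / (σ n ^ 2 + σ n ^ 2 * ΔT n / P n) ≤ C) ↔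
      (∃ c : ℝ, 0 < c ∧ ∃ N : ℕ, ∀ n ≥ N, σ n * ΔT n ≥ c * P n) := by
  have hD : ∀ n, 0 < σ n ^ 2 + σ n ^ 2 * ΔT n / P n := by
    intro n
    have h1 := hσ n; have h2 := hP n; have h3 := hΔ n
    positivity
  have hg_pos : ∀ n, 0 < σ n / (σ n ^ 2 + σ n ^ 2 * ΔT n / P n) :=
    fun n => div_pos (hσ n) (hD n)
  constructor
  · rintro ⟨C, hC⟩
    have hC0 : 0 < C := lt_of_lt_of_le (hg_pos 0) (hC 0)
    have hev : ∀ᶠ n in Filter.atTop, σ n < 1 / (2 * C) :=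
      hσ0.eventually (gt_mem_nhds (by positivity))
    obtain ⟨N, hN⟩ := Filter.eventually_atTop.mp hev
    refine ⟨1 / (2 * C), by positivity, N, fun n hn => ?_⟩
    have hσn := hN n hn
    have hCn := hC n
    have key : σ n * P n ≤ C * (σ n ^ 2 * P n + σ n ^ 2 * ΔT n) := by
      have h := (div_le_iff₀ (hD n)).mp hCn
      have hP' := (hP n).ne'
      have e : (σ n ^ 2 + σ n ^ 2 * ΔT n / P n) * P n
          = σ n ^ 2 * P n + σ n ^ 2 * ΔT n := by
        field_simp
      have := mul_le_mul_of_nonneg_right h (hP n).le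
      calc σ n * P n ≤ C * (σ n ^ 2 + σ n ^ 2 * ΔT n / P n) * P n := this
        _ = C * (σ n ^ 2 * P n + σ n ^ 2 * ΔT n) := by rw [mul_assoc, e]
    -- from key, divide by σ n : P n ≤ C σ P + C σ ΔT
    have h2 : P n ≤ C * σ n * P n + C * σ n * ΔT n := by
      have hσp := hσ n
      nlinarith [mul_pos hσp (hP n)]
    have h3 : C * σ n < 1 / 2 := by
      have := (lt_div_iff₀ (by positivity : (0:ℝ) < 2 * C)).mp hσn
      nlinarith
    rw [ge_iff_le, div_mul_eq_mul_div, one_mul, div_le_iff₀ (by positivity : (0:ℝ) < 2 * C)]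
    nlinarith [mul_pos (hP n) (mul_pos hC0 (hσ n)), hP n, hΔ n,
      mul_pos hC0 (hσ n)]
  · rintro ⟨c, hc, N, hN⟩
    set S := ∑ i ∈ Finset.range N, σ i / (σ i ^ 2 + σ i ^ 2 * ΔT i / P i) with hS
    have hSnn : 0 ≤ S := Finset.sum_nonneg fun i _ => (hg_pos i).le
    refine ⟨1 / c + S, fun n => ?_⟩
    by_cases hn : n < N
    · have hle : σ n / (σ n ^ 2 + σ n ^ 2 * ΔT n / P n) ≤ S :=
        Finset.single_le_sum (fun i _ => (hg_pos i).le) (Finset.mem_range.mpr hn)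
      have : 0 < 1 / c := by positivity
      linarith
    · push_neg at hn
      have h := hN n hn
      have hkey : σ n / (σ n ^ 2 + σ n ^ 2 * ΔT n / P n) ≤ 1 / c := by
        rw [div_le_div_iff₀ (hD n) hc]
        have h1 : c * (σ n * P n) ≤ σ n * (σ n * ΔT n) :=
          by nlinarith [mul_le_mul_of_nonneg_left h (hσ n).le]
        have h2 : c * σ n ≤ σ n ^ 2 * ΔT n / P n := by
          rw [le_div_iff₀ (hP n)]
          nlinarith
        nlinarith [sq_nonneg (σ n)]
      linarith
end

section
/- Let σ, Π: ℕ → ℝ be positive sequences with σ_n → 0, ∑ Π_n < ∞, d·Π_n ≤ σ_n² for a constant d > 0 and all n. Let x: ℕ → ℝ with ∑ x_n² < ∞. For each δ > 0 let ΔTilde_n(δ) = δ² (white training noise) and consider test noise Δ with Δ_n ≤ δ⁴ for all n. Define E = ∑_n [ (σ_n² δ²/(Π_n σ_n² + σ_n² δ²))² x_n² + Π_n σ_n² Δ_n/(Π_n σ_n² + σ_n² δ²)² · Π_n ]. Then sup over admissible Δ of E tends to 0 as δ → 0. -/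
open Filter Finset Topology

private lemma stmt8_aux_glob (σ P : ℕ → ℝ) (x : ℕ → ℝ) (d : ℝ) (hd : 0 < d)
    (hσ : ∀ n, 0 < σ n) (hP : ∀ n, 0 < P n) (hdata : ∀ n, d * P n ≤ σ n ^ 2)
    (δ : ℝ) (hδ : 0 < δ) (Δ : ℕ → ℝ) (hΔ0 : ∀ n, 0 ≤ Δ n) (hΔ : ∀ n, Δ n ≤ δ ^ 4) (n : ℕ) :
    (σ n ^ 2 * δ ^ 2 / (P n * σ n ^ 2 + σ n ^ 2 * δ ^ 2)) ^ 2 * x n ^ 2 +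
      P n * σ n ^ 2 * Δ n / (P n * σ n ^ 2 + σ n ^ 2 * δ ^ 2) ^ 2 * P n
      ≤ x n ^ 2 + P n / d := by
  have hs := hσ n
  have hp := hP n
  have hs2 : (0:ℝ) < σ n ^ 2 := by positivity
  have hD : (0:ℝ) < P n * σ n ^ 2 + σ n ^ 2 * δ ^ 2 := by positivity
  have h1 : (σ n ^ 2 * δ ^ 2 / (P n * σ n ^ 2 + σ n ^ 2 * δ ^ 2)) ^ 2 * x n ^ 2 ≤ x n ^ 2 := by
    have hfrac : σ n ^ 2 * δ ^ 2 / (P n * σ n ^ 2 + σ n ^ 2 * δ ^ 2) ≤ 1 := by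
      rw [div_le_one hD]; nlinarith [sq_nonneg (σ n), sq_nonneg δ]
    have hfrac0 : 0 ≤ σ n ^ 2 * δ ^ 2 / (P n * σ n ^ 2 + σ n ^ 2 * δ ^ 2) := by positivity
    have hfsq : (σ n ^ 2 * δ ^ 2 / (P n * σ n ^ 2 + σ n ^ 2 * δ ^ 2)) ^ 2 ≤ 1 := by nlinarith
    calc (σ n ^ 2 * δ ^ 2 / (P n * σ n ^ 2 + σ n ^ 2 * δ ^ 2)) ^ 2 * x n ^ 2
        ≤ 1 * x n ^ 2 := mul_le_mul_of_nonneg_right hfsq (sq_nonneg (x n))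
      _ = x n ^ 2 := one_mul _
  have h2 : P n * σ n ^ 2 * Δ n / (P n * σ n ^ 2 + σ n ^ 2 * δ ^ 2) ^ 2 * P n ≤ P n / d := by
    rw [div_mul_eq_mul_div, div_le_div_iff₀ (by positivity) hd]
    have hΔn := hΔ n
    have hΔ0n := hΔ0 n
    have hdn := hdata n
    have e1 : d * P n ^ 2 * σ n ^ 2 * Δ n ≤ d * P n ^ 2 * σ n ^ 2 * δ ^ 4 :=
      mul_le_mul_of_nonneg_left hΔn (by positivity)
    have e2 : d * P n ^ 2 * σ n ^ 2 * δ ^ 4 ≤ σ n ^ 2 * (P n * σ n ^ 2 * δ ^ 4) := by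
      have := mul_le_mul_of_nonneg_right hdn (show (0:ℝ) ≤ P n * σ n ^ 2 * δ ^ 4 by positivity)
      nlinarith [this]
    have e3 : σ n ^ 2 * (P n * σ n ^ 2 * δ ^ 4) = P n * (σ n ^ 2 * δ ^ 2) ^ 2 := by ring
    have e4 : P n * (σ n ^ 2 * δ ^ 2) ^ 2 ≤ P n * (P n * σ n ^ 2 + σ n ^ 2 * δ ^ 2) ^ 2 := by
      apply mul_le_mul_of_nonneg_left _ hp.le
      apply pow_le_pow_left₀ (by positivity)
      nlinarith [mul_pos hp hs2]
    nlinarith [e1, e2, e4]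
  linarith

private lemma stmt8_aux_loc (σ P : ℕ → ℝ) (x : ℕ → ℝ) (d : ℝ) (hd : 0 < d)
    (hσ : ∀ n, 0 < σ n) (hP : ∀ n, 0 < P n) (hdata : ∀ n, d * P n ≤ σ n ^ 2)
    (δ : ℝ) (hδ : 0 < δ) (hδ1 : δ ≤ 1)
    (Δ : ℕ → ℝ) (hΔ0 : ∀ n, 0 ≤ Δ n) (hΔ : ∀ n, Δ n ≤ δ ^ 4) (n : ℕ) :
    (σ n ^ 2 * δ ^ 2 / (P n * σ n ^ 2 + σ n ^ 2 * δ ^ 2)) ^ 2 * x n ^ 2 +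
      P n * σ n ^ 2 * Δ n / (P n * σ n ^ 2 + σ n ^ 2 * δ ^ 2) ^ 2 * P n
      ≤ δ ^ 2 * (x n ^ 2 / P n ^ 2 + 1 / (4 * d)) := by
  have hs := hσ n
  have hp := hP n
  have hs2 : (0:ℝ) < σ n ^ 2 := by positivity
  have hD : (0:ℝ) < P n * σ n ^ 2 + σ n ^ 2 * δ ^ 2 := by positivity
  have h1 : (σ n ^ 2 * δ ^ 2 / (P n * σ n ^ 2 + σ n ^ 2 * δ ^ 2)) ^ 2 * x n ^ 2 ≤
      δ ^ 2 * (x n ^ 2 / P n ^ 2) := by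
    have hfrac : σ n ^ 2 * δ ^ 2 / (P n * σ n ^ 2 + σ n ^ 2 * δ ^ 2) ≤ δ ^ 2 / P n := by
      rw [div_le_div_iff₀ hD hp]; nlinarith [mul_pos hs2 (pow_pos hδ 4)]
    have hfrac0 : 0 ≤ σ n ^ 2 * δ ^ 2 / (P n * σ n ^ 2 + σ n ^ 2 * δ ^ 2) := by positivity
    have hsq : (σ n ^ 2 * δ ^ 2 / (P n * σ n ^ 2 + σ n ^ 2 * δ ^ 2)) ^ 2 ≤ (δ ^ 2 / P n) ^ 2 := by
      nlinarith
    have hd4 : (δ ^ 2 / P n) ^ 2 = δ ^ 4 / P n ^ 2 := by ring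
    have hδ4 : δ ^ 4 ≤ δ ^ 2 :=
      pow_le_pow_of_le_one hδ.le hδ1 (by norm_num)
    calc (σ n ^ 2 * δ ^ 2 / (P n * σ n ^ 2 + σ n ^ 2 * δ ^ 2)) ^ 2 * x n ^ 2
        ≤ (δ ^ 2 / P n) ^ 2 * x n ^ 2 := by nlinarith [sq_nonneg (x n)]
      _ = δ ^ 4 / P n ^ 2 * x n ^ 2 := by rw [hd4]
      _ ≤ δ ^ 2 / P n ^ 2 * x n ^ 2 := by
          apply mul_le_mul_of_nonneg_right _ (sq_nonneg (x n))
          exact div_le_div_of_nonneg_right hδ4 (by positivity) |>.trans_eq rfl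
      _ = δ ^ 2 * (x n ^ 2 / P n ^ 2) := by ring
  have h2 : P n * σ n ^ 2 * Δ n / (P n * σ n ^ 2 + σ n ^ 2 * δ ^ 2) ^ 2 * P n ≤
      δ ^ 2 * (1 / (4 * d)) := by
    rw [div_mul_eq_mul_div, div_le_iff₀ (by positivity)]
    have hΔn := hΔ n
    have hΔ0n := hΔ0 n
    have hdn := hdata n
    -- goal: P n * σ n ^ 2 * Δ n * P n ≤ δ^2 * (1/(4d)) * (P σ² + σ² δ²)^2
    have key : P n ^ 2 * σ n ^ 2 * Δ n ≤ δ ^ 2 / (4 * d) * (P n * σ n ^ 2 + σ n ^ 2 * δ ^ 2) ^ 2 := by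
      have hexp : (P n * σ n ^ 2 + σ n ^ 2 * δ ^ 2) ^ 2 ≥ 4 * (P n * σ n ^ 2) * (σ n ^ 2 * δ ^ 2) := by
        nlinarith [sq_nonneg (P n * σ n ^ 2 - σ n ^ 2 * δ ^ 2)]
      have hL : P n ^ 2 * σ n ^ 2 * Δ n ≤ P n ^ 2 * σ n ^ 2 * δ ^ 4 :=
        mul_le_mul_of_nonneg_left hΔn (by positivity)
      have hR : P n ^ 2 * σ n ^ 2 * δ ^ 4 ≤ δ ^ 2 / (4 * d) * (4 * (P n * σ n ^ 2) * (σ n ^ 2 * δ ^ 2)) := by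
        have heq : δ ^ 2 / (4 * d) * (4 * (P n * σ n ^ 2) * (σ n ^ 2 * δ ^ 2)) =
            (σ n ^ 2 / d) * (P n * σ n ^ 2 * δ ^ 4) := by field_simp
        rw [heq]
        have hPd : P n ≤ σ n ^ 2 / d := by rw [le_div_iff₀ hd]; nlinarith
        have h0 : (0:ℝ) ≤ P n * σ n ^ 2 * δ ^ 4 := by positivity
        calc P n ^ 2 * σ n ^ 2 * δ ^ 4 = P n * (P n * σ n ^ 2 * δ ^ 4) := by ring
          _ ≤ (σ n ^ 2 / d) * (P n * σ n ^ 2 * δ ^ 4) := mul_le_mul_of_nonneg_right hPd h0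
      have hmono : δ ^ 2 / (4 * d) * (4 * (P n * σ n ^ 2) * (σ n ^ 2 * δ ^ 2)) ≤
          δ ^ 2 / (4 * d) * (P n * σ n ^ 2 + σ n ^ 2 * δ ^ 2) ^ 2 :=
        mul_le_mul_of_nonneg_left hexp (by positivity)
      linarith
    calc P n * σ n ^ 2 * Δ n * P n = P n ^ 2 * σ n ^ 2 * Δ n := by ring
      _ ≤ δ ^ 2 / (4 * d) * (P n * σ n ^ 2 + σ n ^ 2 * δ ^ 2) ^ 2 := key
      _ = δ ^ 2 * (1 / (4 * d)) * (P n * σ n ^ 2 + σ n ^ 2 * δ ^ 2) ^ 2 := by ring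
  linarith

/-- Convergence of the post-processing approach with white training noise of level `δ`,
tested on noise of level at most `δ ^ 2`, under the data assumption `d P_n ≤ σ_n²`. -/
theorem stmt8 (σ P x : ℕ → ℝ) (d : ℝ) (hd : 0 < d)
    (hσ : ∀ n, 0 < σ n) (hσ0 : Filter.Tendsto σ Filter.atTop (nhds 0))
    (hP : ∀ n, 0 < P n) (hPsum : Summable P)
    (hdata : ∀ n, d * P n ≤ σ n ^ 2)
    (hx : Summable fun n => x n ^ 2) :
    ∀ ε > (0 : ℝ), ∃ δ₀ > (0 : ℝ), ∀ δ : ℝ, 0 < δ → δ ≤ δ₀ →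
      ∀ Δ : ℕ → ℝ, (∀ n, 0 ≤ Δ n) → (∀ n, Δ n ≤ δ ^ 4) →
        (∑' n, ((σ n ^ 2 * δ ^ 2 / (P n * σ n ^ 2 + σ n ^ 2 * δ ^ 2)) ^ 2 * x n ^ 2 +
            P n * σ n ^ 2 * Δ n / (P n * σ n ^ 2 + σ n ^ 2 * δ ^ 2) ^ 2 * P n)) ≤ ε := by
  intro ε hε
  set g : ℕ → ℝ := fun n => x n ^ 2 + P n / d with hg
  have hgsum : Summable g := hx.add (hPsum.div_const d)
  have htail : Tendsto (fun i => ∑' k, g (k + i)) atTop (𝓝 0) := tendsto_sum_nat_add g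
  obtain ⟨N, hN⟩ := (htail.eventually (eventually_le_nhds (show (0:ℝ) < ε / 2 by linarith))).exists
  set C : ℝ := ∑ i ∈ range N, (x i ^ 2 / P i ^ 2 + 1 / (4 * d)) with hC
  have hC0 : 0 ≤ C := Finset.sum_nonneg fun i _ => by positivity
  refine ⟨min 1 (Real.sqrt (ε / (2 * (C + 1)))), lt_min one_pos (Real.sqrt_pos.mpr (by positivity)), ?_⟩
  intro δ hδ hδ0 Δ hΔ0 hΔ
  have hδ1 : δ ≤ 1 := hδ0.trans (min_le_left _ _)
  have hδs : δ ≤ Real.sqrt (ε / (2 * (C + 1))) := hδ0.trans (min_le_right _ _)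
  have hδ2 : δ ^ 2 ≤ ε / (2 * (C + 1)) := by
    have := Real.sq_sqrt (show (0:ℝ) ≤ ε / (2 * (C + 1)) by positivity)
    nlinarith [Real.sqrt_nonneg (ε / (2 * (C + 1)))]
  set S : ℕ → ℝ := fun n => (σ n ^ 2 * δ ^ 2 / (P n * σ n ^ 2 + σ n ^ 2 * δ ^ 2)) ^ 2 * x n ^ 2 +
      P n * σ n ^ 2 * Δ n / (P n * σ n ^ 2 + σ n ^ 2 * δ ^ 2) ^ 2 * P n with hS
  have hS0 : ∀ n, 0 ≤ S n := fun n => by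
    have := hσ n; have := hP n; have := hΔ0 n; positivity
  have hSg : ∀ n, S n ≤ g n := fun n =>
    stmt8_aux_glob σ P x d hd hσ hP hdata δ hδ Δ hΔ0 hΔ n
  have hSsum : Summable S := Summable.of_nonneg_of_le hS0 hSg hgsum
  have hsplit : ∑' n, S n = (∑ i ∈ range N, S i) + ∑' i, S (i + N) :=
    (Summable.sum_add_tsum_nat_add N hSsum).symm
  have htail2 : ∑' i, S (i + N) ≤ ∑' i, g (i + N) :=
    Summable.tsum_le_tsum (fun i => hSg (i + N)) ((summable_nat_add_iff N).mpr hSsum)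
      ((summable_nat_add_iff N).mpr hgsum)
  have hgtail : ∑' i, g (i + N) ≤ ε / 2 := hN
  have hhead : (∑ i ∈ range N, S i) ≤ δ ^ 2 * C := by
    rw [hC, Finset.mul_sum]
    apply Finset.sum_le_sum
    intro i _
    exact stmt8_aux_loc σ P x d hd hσ hP hdata δ hδ hδ1 Δ hΔ0 hΔ i
  have hhead2 : δ ^ 2 * C ≤ ε / 2 := by
    have h1 : δ ^ 2 * C ≤ ε / (2 * (C + 1)) * C :=
      mul_le_mul_of_nonneg_right hδ2 hC0
    have h2 : ε / (2 * (C + 1)) * C ≤ ε / 2 := by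
      rw [div_mul_eq_mul_div, div_le_div_iff₀ (by positivity) (by norm_num)]
      nlinarith
    linarith
  rw [hsplit]
  linarith
end

section
/- Let σ, Π, Δ: ℕ → ℝ be positive sequences with σ_n → 0 and sup_n Δ_n < ∞, and let β > 0. Then the sequence g_n = σ_n / (σ_n² + (3/(8β))·Δ_n/(3σ_n²Π_n + Δ_n)) is bounded if and only if there exist c > 0 and N such that Δ_n ≥ c·σ_n³·Π_n for all n ≥ N. -/
/-- Continuity criterion for the adversarial regularizer with relaxed gradient
penalty: the filter coefficients are bounded iff `Δ n ≥ c σ n ^ 3 P n` eventually. -/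
theorem stmt12 (σ P Δ : ℕ → ℝ) (β : ℝ) (hβ : 0 < β)
    (hσ : ∀ n, 0 < σ n) (hσ0 : Filter.Tendsto σ Filter.atTop (nhds 0))
    (hP : ∀ n, 0 < P n) (hΔ : ∀ n, 0 < Δ n)
    (hΔb : ∃ M : ℝ, ∀ n, Δ n ≤ M) :
    (∃ C : ℝ, ∀ n,
        σ n / (σ n ^ 2 + 3 / (8 * β) * (Δ n / (3 * σ n ^ 2 * P n + Δ n))) ≤ C) ↔
      (∃ c : ℝ, 0 < c ∧ ∃ N : ℕ, ∀ n ≥ N, Δ n ≥ c * σ n ^ 3 * P n) := by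
  constructor
  · rintro ⟨C, hC⟩
    have hC0 : 0 < C := by
      refine lt_of_lt_of_le ?_ (hC 0)
      have h1 := hσ 0; have h2 := hP 0; have h3 := hΔ 0
      positivity
    refine ⟨4 * β / C, by positivity, ?_⟩
    obtain ⟨N, hN⟩ := Filter.eventually_atTop.mp
      (hσ0.eventually (gt_mem_nhds (by positivity : (0:ℝ) < 1 / (2 * C))))
    refine ⟨N, fun n hn => ?_⟩
    have hσn := hσ n; have hPn := hP n; have hΔn := hΔ n
    have hsmall : σ n * (2 * C) < 1 := by
      have := hN n hn
      rwa [lt_div_iff₀ (by positivity : (0:ℝ) < 2 * C)] at this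
    have hE : 0 < 3 * σ n ^ 2 * P n + Δ n := by positivity
    have hD : 0 < σ n ^ 2 + 3 / (8 * β) * (Δ n / (3 * σ n ^ 2 * P n + Δ n)) := by
      positivity
    have h1 := (div_le_iff₀ hD).mp (hC n)
    set t := 3 / (8 * β) * (Δ n / (3 * σ n ^ 2 * P n + Δ n)) with ht
    -- t ≥ σ/(2C)
    have hlam : σ n ≤ t * (2 * C) := by
      nlinarith [mul_lt_mul_of_pos_right hsmall hσn]
    -- hence Δ/E ≥ 4βσ/(3C)
    have ht0 : 0 < t := by
      have : 0 < σ n ^ 2 := by positivity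
      nlinarith
    have hq : 4 * β * σ n / (3 * C) ≤ Δ n / (3 * σ n ^ 2 * P n + Δ n) := by
      rw [div_le_div_iff₀ (by positivity) hE]
      have heq : Δ n / (3 * σ n ^ 2 * P n + Δ n) * (3 * σ n ^ 2 * P n + Δ n)
          = Δ n := div_mul_cancel₀ _ hE.ne'
      have h2 : σ n * (3 * σ n ^ 2 * P n + Δ n) ≤ t * (2 * C) * (3 * σ n ^ 2 * P n + Δ n) :=
        mul_le_mul_of_nonneg_right hlam hE.le
      rw [ht] at h2
      rw [show 3 / (8 * β) * (Δ n / (3 * σ n ^ 2 * P n + Δ n)) * (2 * C) *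
          (3 * σ n ^ 2 * P n + Δ n) = 3 / (8 * β) * (2 * C) *
          (Δ n / (3 * σ n ^ 2 * P n + Δ n) * (3 * σ n ^ 2 * P n + Δ n)) from by ring,
        heq] at h2
      have h4 := mul_le_mul_of_nonneg_left h2 (by positivity : (0:ℝ) ≤ 4 * β)
      have h5 : 4 * β * (3 / (8 * β) * (2 * C) * Δ n) = Δ n * (3 * C) := by
        field_simp; ring
      linarith
    -- conclude
    rw [ge_iff_le, div_mul_eq_mul_div, div_mul_eq_mul_div, div_le_iff₀ hC0]
    rw [div_le_div_iff₀ (by positivity : (0:ℝ) < 3 * C) hE] at hq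
    nlinarith [hq, mul_pos (mul_pos (mul_pos hβ hσn) hΔn) (by norm_num : (0:ℝ) < 4)]
  · rintro ⟨c, hc, N, hN⟩
    obtain ⟨S, hS⟩ : ∃ S, ∀ n, σ n ≤ S := by
      obtain ⟨S, hS⟩ := hσ0.bddAbove_range
      exact ⟨S, fun n => hS ⟨n, rfl⟩⟩
    have hS0 : 0 < S := lt_of_lt_of_le (hσ 0) (hS 0)
    set C0 : ℝ := 8 * β * (3 + c * S) / (3 * c) with hC0def
    have hC0pos : 0 < C0 := by positivity
    obtain ⟨B, hB⟩ := ((Set.finite_Iio N).image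
      (fun n => σ n / (σ n ^ 2 + 3 / (8 * β) * (Δ n / (3 * σ n ^ 2 * P n + Δ n))))).bddAbove
    refine ⟨max C0 B, fun n => ?_⟩
    rcases lt_or_ge n N with h | h
    · exact le_trans (hB ⟨n, h, rfl⟩) (le_max_right _ _)
    · refine le_trans ?_ (le_max_left _ _)
      have hσn := hσ n; have hPn := hP n; have hΔn := hΔ n
      have hE : 0 < 3 * σ n ^ 2 * P n + Δ n := by positivity
      have hD : 0 < σ n ^ 2 + 3 / (8 * β) * (Δ n / (3 * σ n ^ 2 * P n + Δ n)) := by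
        positivity
      rw [div_le_iff₀ hD]
      have hΔc : c * σ n ^ 3 * P n ≤ Δ n := hN n h
      -- key: Δ/E ≥ c σ / (3 + c S)
      have hq : c * σ n / (3 + c * S) ≤ Δ n / (3 * σ n ^ 2 * P n + Δ n) := by
        rw [div_le_div_iff₀ (by positivity) hE]
        nlinarith [mul_le_mul_of_nonneg_right (hS n) (mul_pos hc hΔn).le]
      -- so t ≥ (c σ) * (1/(8β(3+cS)/3)) and C0 * t ≥ σ
      have key : σ n ≤ C0 * (3 / (8 * β) * (Δ n / (3 * σ n ^ 2 * P n + Δ n))) := by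
        have h2 := mul_le_mul_of_nonneg_left hq
          (by positivity : (0:ℝ) ≤ C0 * (3 / (8 * β)))
        calc σ n = C0 * (3 / (8 * β)) * (c * σ n / (3 + c * S)) := by
              rw [hC0def]; field_simp
          _ ≤ C0 * (3 / (8 * β)) * (Δ n / (3 * σ n ^ 2 * P n + Δ n)) := h2
          _ = C0 * (3 / (8 * β) * (Δ n / (3 * σ n ^ 2 * P n + Δ n))) := by ring
      nlinarith [key, mul_nonneg hC0pos.le (sq_nonneg (σ n))]
end

section
/- Let σ, Π: ℕ → ℝ be positive with ∑ σ_n² < ∞, σ_n and Π_n bounded, ∑ Π_n < ∞, and x: ℕ → ℝ with ∑ x_n² < ∞; let β > 0. For δ ∈ (0,1), white training noise Δ^μ_n = δ², and test noise Δ with Δ_n ≤ δ⁴, define g_n = σ_n/(σ_n² + (3/(8β))·δ²/(3σ_n²Π_n + δ²)) and E = ∑_n (1 − σ_n g_n)² x_n² + g_n² Δ_n. Then sup over admissible Δ of E tends to 0 as δ → 0. -/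
lemma stmt15_aux (s p c d : ℝ) (hs : 0 < s) (hp : 0 < p) (hc : 0 < c) (hd : 0 < d) :
    (0 ≤ 1 - s * (s / (s ^ 2 + c * (d ^ 2 / (3 * s ^ 2 * p + d ^ 2)))))
    ∧ (1 - s * (s / (s ^ 2 + c * (d ^ 2 / (3 * s ^ 2 * p + d ^ 2)))) ≤ 1)
    ∧ (1 - s * (s / (s ^ 2 + c * (d ^ 2 / (3 * s ^ 2 * p + d ^ 2)))) ≤ c * d ^ 2 / (3 * s ^ 4 * p))
    ∧ (0 ≤ s / (s ^ 2 + c * (d ^ 2 / (3 * s ^ 2 * p + d ^ 2))))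
    ∧ (s / (s ^ 2 + c * (d ^ 2 / (3 * s ^ 2 * p + d ^ 2))) ≤ 1 / s)
    ∧ (s / (s ^ 2 + c * (d ^ 2 / (3 * s ^ 2 * p + d ^ 2)))
        ≤ s * (3 * s ^ 2 * p + d ^ 2) / (c * d ^ 2)) := by
  have hT : (0:ℝ) < 3 * s ^ 2 * p + d ^ 2 := by positivity
  have hq : (0:ℝ) < d ^ 2 / (3 * s ^ 2 * p + d ^ 2) := by positivity
  set q : ℝ := d ^ 2 / (3 * s ^ 2 * p + d ^ 2) with hqdef
  have hD : (0:ℝ) < s ^ 2 + c * q := by positivity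
  have hcq : 0 < c * q := mul_pos hc hq
  have hsub : 1 - s * (s / (s ^ 2 + c * q)) = c * q / (s ^ 2 + c * q) := by
    field_simp; ring
  refine ⟨?_, ?_, ?_, ?_, ?_, ?_⟩
  · rw [hsub]; positivity
  · rw [hsub, div_le_one hD]; nlinarith [sq_nonneg s]
  · rw [hsub]
    have h1 : c * q / (s ^ 2 + c * q) ≤ c * q / s ^ 2 :=
      div_le_div_of_nonneg_left hcq.le (by positivity) (by nlinarith)
    have e1 : c * q / s ^ 2 = c * d ^ 2 / ((3 * s ^ 2 * p + d ^ 2) * s ^ 2) := by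
      rw [hqdef]; field_simp
    have h2 : c * d ^ 2 / ((3 * s ^ 2 * p + d ^ 2) * s ^ 2) ≤ c * d ^ 2 / (3 * s ^ 4 * p) :=
      div_le_div_of_nonneg_left (by positivity) (by positivity) (by nlinarith [sq_nonneg d, pow_pos hs 2])
    exact h1.trans (e1 ▸ h2)
  · positivity
  · have h1 : s / (s ^ 2 + c * q) ≤ s / s ^ 2 :=
      div_le_div_of_nonneg_left hs.le (by positivity) (by nlinarith)
    have e1 : s / s ^ 2 = 1 / s := by field_simp [sq]
    exact h1.trans e1.le
  · have h1 : s / (s ^ 2 + c * q) ≤ s / (c * q) :=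
      div_le_div_of_nonneg_left hs.le hcq (by nlinarith [sq_nonneg s])
    have e1 : s / (c * q) = s * (3 * s ^ 2 * p + d ^ 2) / (c * d ^ 2) := by
      rw [hqdef]; field_simp
    exact h1.trans e1.le

set_option maxHeartbeats 1000000 in
/-- Convergence of the adversarial regularizer with gradient penalty trained on white
noise of level `δ`, tested on noise of level at most `δ²`. -/
theorem stmt15 (σ P x : ℕ → ℝ) (β : ℝ) (hβ : 0 < β)
    (hσ : ∀ n, 0 < σ n) (hσsum : Summable fun n => σ n ^ 2)
    (hσb : ∃ M : ℝ, ∀ n, σ n ≤ M)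
    (hP : ∀ n, 0 < P n) (hPb : ∃ M : ℝ, ∀ n, P n ≤ M) (hPsum : Summable P)
    (hx : Summable fun n => x n ^ 2) :
    ∀ ε > (0 : ℝ), ∃ δ₀ > (0 : ℝ), ∀ δ : ℝ, 0 < δ → δ < 1 → δ ≤ δ₀ →
      ∀ Δ : ℕ → ℝ, (∀ n, 0 ≤ Δ n) → (∀ n, Δ n ≤ δ ^ 4) →
        (∑' n,
          ((1 - σ n * (σ n / (σ n ^ 2 +
              3 / (8 * β) * (δ ^ 2 / (3 * σ n ^ 2 * P n + δ ^ 2))))) ^ 2 * x n ^ 2 +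
            (σ n / (σ n ^ 2 +
              3 / (8 * β) * (δ ^ 2 / (3 * σ n ^ 2 * P n + δ ^ 2)))) ^ 2 * Δ n)) ≤ ε := by
  obtain ⟨Mσ, hMσ⟩ := hσb
  obtain ⟨MP, hMP⟩ := hPb
  have hMσ0 : 0 < Mσ := lt_of_lt_of_le (hσ 0) (hMσ 0)
  have hMP0 : 0 < MP := lt_of_lt_of_le (hP 0) (hMP 0)
  intro ε hε
  set c : ℝ := 3 / (8 * β) with hc
  have hc0 : 0 < c := by positivity
  set K : ℝ := (3 * Mσ ^ 2 * MP + 1) ^ 2 / c ^ 2 with hK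
  have hK0 : 0 ≤ K := by positivity
  -- dominating summable function
  set h : ℕ → ℝ := fun n => x n ^ 2 + K * σ n ^ 2 with hh
  have hhsum : Summable h := hx.add (hσsum.mul_left K)
  -- choose the tail cutoff N
  have htail : Filter.Tendsto (fun N => ∑' i, h (i + N)) Filter.atTop (nhds 0) :=
    tendsto_sum_nat_add h
  obtain ⟨N, hN⟩ := (htail.eventually (eventually_lt_nhds (by linarith : (0:ℝ) < ε/2))).exists
  -- head coefficient
  set B : ℝ := ∑ i ∈ Finset.range N,
      (c ^ 2 * x i ^ 2 / (9 * σ i ^ 8 * P i ^ 2) + 1 / σ i ^ 2) with hB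
  have hB0 : 0 ≤ B := Finset.sum_nonneg fun i _ => by positivity
  clear_value c K h B
  refine ⟨ε / (2 * (B + 1)), by positivity, ?_⟩
  intro δ hδ0 hδ1 hδ₀ Δ hΔ0 hΔb
  set g : ℕ → ℝ := fun n =>
    σ n / (σ n ^ 2 + c * (δ ^ 2 / (3 * σ n ^ 2 * P n + δ ^ 2))) with hg
  set f : ℕ → ℝ := fun n => (1 - σ n * g n) ^ 2 * x n ^ 2 + g n ^ 2 * Δ n with hf
  clear_value g f
  have key : ∀ n, (0 ≤ f n) ∧ (f n ≤ h n) ∧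
      (f n ≤ δ ^ 4 * (c ^ 2 * x n ^ 2 / (9 * σ n ^ 8 * P n ^ 2) + 1 / σ n ^ 2)) := by
    intro n
    obtain ⟨h1, h2, h3, h4, h5, h6⟩ :=
      stmt15_aux (σ n) (P n) c δ (hσ n) (hP n) hc0 hδ0
    have hgn : g n = σ n / (σ n ^ 2 + c * (δ ^ 2 / (3 * σ n ^ 2 * P n + δ ^ 2))) := by
      rw [hg]
    rw [← hgn] at h1 h2 h3 h4 h5 h6
    have hΔn := hΔ0 n
    have hΔbn := hΔb n
    have hsn := hσ n
    have hpn := hP n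
    have hfn : f n = (1 - σ n * g n) ^ 2 * x n ^ 2 + g n ^ 2 * Δ n := by rw [hf]
    rw [hfn]
    refine ⟨by positivity, ?_, ?_⟩
    · -- f n ≤ h n
      have ha2 : (1 - σ n * g n) ^ 2 ≤ 1 := by nlinarith
      have t1 : (1 - σ n * g n) ^ 2 * x n ^ 2 ≤ x n ^ 2 := by
        have := mul_le_mul_of_nonneg_right ha2 (sq_nonneg (x n))
        linarith
      have t2 : g n ^ 2 * Δ n ≤ K * σ n ^ 2 := by
        have hg2 : g n ^ 2 ≤ (σ n * (3 * σ n ^ 2 * P n + δ ^ 2) / (c * δ ^ 2)) ^ 2 :=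
          pow_le_pow_left₀ h4 h6 2
        have step : g n ^ 2 * Δ n
            ≤ (σ n * (3 * σ n ^ 2 * P n + δ ^ 2) / (c * δ ^ 2)) ^ 2 * δ ^ 4 :=
          mul_le_mul hg2 hΔbn hΔn (by positivity)
        have eq1 : (σ n * (3 * σ n ^ 2 * P n + δ ^ 2) / (c * δ ^ 2)) ^ 2 * δ ^ 4
            = σ n ^ 2 * (3 * σ n ^ 2 * P n + δ ^ 2) ^ 2 / c ^ 2 := by
          field_simp
        have hTb : 3 * σ n ^ 2 * P n + δ ^ 2 ≤ 3 * Mσ ^ 2 * MP + 1 := by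
          have hσn2 : σ n ^ 2 ≤ Mσ ^ 2 := pow_le_pow_left₀ (hσ n).le (hMσ n) 2
          have hδ2 : δ ^ 2 ≤ 1 := by
            calc δ ^ 2 ≤ 1 ^ 2 := pow_le_pow_left₀ hδ0.le hδ1.le 2
              _ = 1 := one_pow 2
          have hm : σ n ^ 2 * P n ≤ Mσ ^ 2 * MP :=
            mul_le_mul hσn2 (hMP n) (hP n).le (by positivity)
          linarith
        have hA : (3 * σ n ^ 2 * P n + δ ^ 2) ^ 2 ≤ (3 * Mσ ^ 2 * MP + 1) ^ 2 :=
          pow_le_pow_left₀ (by positivity) hTb 2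
        have last : σ n ^ 2 * (3 * σ n ^ 2 * P n + δ ^ 2) ^ 2 / c ^ 2
            ≤ σ n ^ 2 * (3 * Mσ ^ 2 * MP + 1) ^ 2 / c ^ 2 := by gcongr
        have eqK : σ n ^ 2 * (3 * Mσ ^ 2 * MP + 1) ^ 2 / c ^ 2 = K * σ n ^ 2 := by
          rw [hK]; ring
        calc g n ^ 2 * Δ n ≤ _ := step
          _ = _ := eq1
          _ ≤ _ := last
          _ = K * σ n ^ 2 := eqK
      calc (1 - σ n * g n) ^ 2 * x n ^ 2 + g n ^ 2 * Δ n
          ≤ x n ^ 2 + K * σ n ^ 2 := add_le_add t1 t2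
        _ = h n := by rw [hh]
    · -- head bound
      have hb2 : (1 - σ n * g n) ^ 2 ≤ (c * δ ^ 2 / (3 * σ n ^ 4 * P n)) ^ 2 :=
        pow_le_pow_left₀ h1 h3 2
      have t1 : (1 - σ n * g n) ^ 2 * x n ^ 2
          ≤ (c * δ ^ 2 / (3 * σ n ^ 4 * P n)) ^ 2 * x n ^ 2 :=
        mul_le_mul_of_nonneg_right hb2 (sq_nonneg (x n))
      have e1 : (c * δ ^ 2 / (3 * σ n ^ 4 * P n)) ^ 2 * x n ^ 2
          = δ ^ 4 * (c ^ 2 * x n ^ 2 / (9 * σ n ^ 8 * P n ^ 2)) := by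
        field_simp; ring
      have t2 : g n ^ 2 * Δ n ≤ δ ^ 4 * (1 / σ n ^ 2) := by
        have hg2 : g n ^ 2 ≤ (1 / σ n) ^ 2 := pow_le_pow_left₀ h4 h5 2
        have step : g n ^ 2 * Δ n ≤ (1 / σ n) ^ 2 * δ ^ 4 :=
          mul_le_mul hg2 hΔbn hΔn (by positivity)
        have e2 : (1 / σ n) ^ 2 * δ ^ 4 = δ ^ 4 * (1 / σ n ^ 2) := by
          field_simp
        linarith [e2 ▸ step]
      calc (1 - σ n * g n) ^ 2 * x n ^ 2 + g n ^ 2 * Δ n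
          ≤ δ ^ 4 * (c ^ 2 * x n ^ 2 / (9 * σ n ^ 8 * P n ^ 2)) + δ ^ 4 * (1 / σ n ^ 2) :=
            add_le_add (e1 ▸ t1) t2
        _ = δ ^ 4 * (c ^ 2 * x n ^ 2 / (9 * σ n ^ 8 * P n ^ 2) + 1 / σ n ^ 2) := by ring
  have hf0 : ∀ n, 0 ≤ f n := fun n => (key n).1
  have hfh : ∀ n, f n ≤ h n := fun n => (key n).2.1
  have hfsum : Summable f := Summable.of_nonneg_of_le hf0 hfh hhsum
  -- split the sum
  have hsplit := Summable.sum_add_tsum_nat_add N hfsum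
  have goal_eq : tsum f = ∑' i, f i := rfl
  rw [goal_eq, ← hsplit]
  have head : (∑ i ∈ Finset.range N, f i) ≤ δ ^ 4 * B := by
    rw [hB, Finset.mul_sum]
    exact Finset.sum_le_sum fun i _ => (key i).2.2
  have tail : (∑' i, f (i + N)) ≤ ∑' i, h (i + N) :=
    Summable.tsum_le_tsum (fun i => hfh (i + N)) ((summable_nat_add_iff N).mpr hfsum)
      ((summable_nat_add_iff N).mpr hhsum)
  have hδ4 : δ ^ 4 ≤ δ := by
    have h3 : δ ^ 3 ≤ 1 ^ 3 := pow_le_pow_left₀ hδ0.le hδ1.le 3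
    have h3' : δ ^ 3 ≤ 1 := by simpa using h3
    calc δ ^ 4 = δ ^ 3 * δ := by ring
      _ ≤ 1 * δ := mul_le_mul_of_nonneg_right h3' hδ0.le
      _ = δ := one_mul δ
  have head2 : δ ^ 4 * B ≤ ε / 2 := by
    have h1 : δ ^ 4 * B ≤ δ * B := mul_le_mul_of_nonneg_right hδ4 hB0
    have h2 : δ * B ≤ (ε / (2 * (B + 1))) * B := mul_le_mul_of_nonneg_right hδ₀ hB0
    have h3 : (ε / (2 * (B + 1))) * B ≤ ε / 2 := by
      rw [div_mul_eq_mul_div, div_le_div_iff₀ (by positivity) (by positivity)]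
      ring_nf
      nlinarith [mul_nonneg hε.le hB0]
    linarith
  linarith [hN]
end
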